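/- Let X be the genus 2 curve glued from Spec k[t³,t⁴,t⁵] and Spec k[s] via t = s⁻¹, with singular point p₀, and let p, q be any two smooth points of X defined by ideals (t−a), (t−b) with a, b nonzero. Then the generalized divisors p₀ + p and p₀ + q are linearly equivalent. Consequently dim|p₀ + p| ≥ 1. -/

import Mathlib

/-!
STATEMENT 17: Let X be the genus 2 curve glued from X₁ = Spec k[t³,t⁴,t⁵] and
X₂ = Spec k[s] via t = s⁻¹, with singular point p₀, and let p, q be smooth
points given by ideals (t-a), (t-b) with a, b ≠ 0.  Then the generalized
divisors p₀ + p and p₀ + q are linearly equivalent; consequently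
dim|p₀ + p| ≥ 1.

We record a subsheaf of K = k(t) by its modules of sections over the two
charts.  The ideal sheaf of p₀ + p has sections m·I_p = t³(t-a)k[t] over X₁,
spanned over O₁ by t³(t-a), t⁴(t-a), t⁵(t-a), and (s - a⁻¹)k[s] over X₂.
Linear equivalence means the two section modules are carried to each other by
multiplication by one nonzero rational function f.  dim|p₀+p| ≥ 1 is the
existence of two k-linearly independent elements of
H⁰(X, L(p₀+p)) = {f : f·(p₀+p-sections) ⊆ O on both charts}.
-/

open Submodule

variable (k : Type*) [Field k]

noncomputable abbrev le2T : RatFunc k := RatFunc.X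

noncomputable def le2O1 : Subalgebra k (RatFunc k) :=
  Algebra.adjoin k {le2T k ^ 3, le2T k ^ 4, le2T k ^ 5}

noncomputable def le2O2 : Subalgebra k (RatFunc k) :=
  Algebra.adjoin k {(le2T k)⁻¹}

/-- Sections of the ideal sheaf of p₀ + p over X₁, p the point t = a. -/
noncomputable def le2D1 (a : k) : Submodule (le2O1 k) (RatFunc k) :=
  Submodule.span (le2O1 k)
    {le2T k ^ 3 * (le2T k - algebraMap k (RatFunc k) a),
     le2T k ^ 4 * (le2T k - algebraMap k (RatFunc k) a),
     le2T k ^ 5 * (le2T k - algebraMap k (RatFunc k) a)}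

/-- Sections of the ideal sheaf of p₀ + p over X₂ (p₀ ∉ X₂): the ideal
(s - a⁻¹) of the point p in k[s]. -/
noncomputable def le2D2 (a : k) : Submodule (le2O2 k) (RatFunc k) :=
  Submodule.span (le2O2 k) {(le2T k)⁻¹ - algebraMap k (RatFunc k) a⁻¹}

set_option synthInstance.maxHeartbeats 1000000
set_option maxHeartbeats 1000000

lemma le2_X_sub_C_ne_zero (a : k) :
    (RatFunc.X : RatFunc k) - algebraMap k _ a ≠ 0 := by
  rw [RatFunc.algebraMap_eq_C, ← RatFunc.algebraMap_X, ← RatFunc.algebraMap_C, ← map_sub]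
  exact RatFunc.algebraMap_ne_zero (Polynomial.X_sub_C_ne_zero a)

/-- Multiplication preserving membership in a subalgebra, extended over a span. -/
lemma le2_span_mul_mem (A : Subalgebra k (RatFunc k)) (f : RatFunc k)
    (S : Set (RatFunc k)) (h : ∀ s ∈ S, f * s ∈ A) :
    ∀ x ∈ Submodule.span A S, f * x ∈ A := by
  intro x hx
  refine Submodule.span_induction (p := fun x _ => f * x ∈ A) h ?_ ?_ ?_ hx
  · show f * 0 ∈ A; rw [mul_zero]; exact zero_mem _
  · intro y z _ _ hy hz; show f * (y + z) ∈ A; rw [mul_add]; exact add_mem hy hz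
  · intro c y _ hy
    show f * (c • y) ∈ A
    have : f * (c • y) = (c : RatFunc k) * (f * y) := by
      rw [Algebra.smul_def c y]; show f * ((c : RatFunc k) * y) = _; ring
    rw [this]
    exact mul_mem c.2 hy

lemma le2_span_const_mul (A : Subalgebra k (RatFunc k)) (c : k) (hc : c ≠ 0)
    (v : RatFunc k) :
    Submodule.span A {algebraMap k (RatFunc k) c * v} = Submodule.span A {v} := by
  apply le_antisymm <;> rw [Submodule.span_le, Set.singleton_subset_iff]
  · exact Submodule.mem_span_singleton.2
      ⟨⟨algebraMap k (RatFunc k) c, A.algebraMap_mem c⟩, rfl⟩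
  · refine Submodule.mem_span_singleton.2
      ⟨⟨algebraMap k (RatFunc k) c⁻¹, A.algebraMap_mem c⁻¹⟩, ?_⟩
    show algebraMap k (RatFunc k) c⁻¹ * (algebraMap k (RatFunc k) c * v) = v
    rw [← mul_assoc, ← map_mul, inv_mul_cancel₀ hc, map_one, one_mul]

theorem singular_plus_smooth_points_linearly_equivalent
    (a b : k) (ha : a ≠ 0) (hb : b ≠ 0) :
    -- p₀ + p and p₀ + q are linearly equivalent:
    (∃ f : RatFunc k, f ≠ 0 ∧
      (le2D1 k a).map (LinearMap.mulLeft (le2O1 k) f) = le2D1 k b ∧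
      (le2D2 k a).map (LinearMap.mulLeft (le2O2 k) f) = le2D2 k b) ∧
    -- consequently dim |p₀ + p| ≥ 1: H⁰(X, L(p₀+p)) contains two
    -- k-linearly independent elements:
    (∃ f g : RatFunc k,
      (∀ x ∈ le2D1 k a, f * x ∈ le2O1 k) ∧ (∀ x ∈ le2D2 k a, f * x ∈ le2O2 k) ∧
      (∀ x ∈ le2D1 k a, g * x ∈ le2O1 k) ∧ (∀ x ∈ le2D2 k a, g * x ∈ le2O2 k) ∧
      LinearIndependent k ![f, g]) := by
  have hXa : (RatFunc.X : RatFunc k) - algebraMap k _ a ≠ 0 := le2_X_sub_C_ne_zero k a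
  have hXb : (RatFunc.X : RatFunc k) - algebraMap k _ b ≠ 0 := le2_X_sub_C_ne_zero k b
  have hX : (RatFunc.X : RatFunc k) ≠ 0 := RatFunc.X_ne_zero
  have hCa : algebraMap k (RatFunc k) a ≠ 0 := by simp [ha]
  have hXa' : (RatFunc.X : RatFunc k) - RatFunc.C a ≠ 0 := by
    rw [← RatFunc.algebraMap_eq_C]; exact hXa
  have hXb' : (RatFunc.X : RatFunc k) - RatFunc.C b ≠ 0 := by
    rw [← RatFunc.algebraMap_eq_C]; exact hXb
  have hCa' : (RatFunc.C a : RatFunc k) ≠ 0 := by rw [← RatFunc.algebraMap_eq_C]; exact hCa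
  have hCb : algebraMap k (RatFunc k) b ≠ 0 := by simp [hb]
  have hCb' : (RatFunc.C b : RatFunc k) ≠ 0 := by rw [← RatFunc.algebraMap_eq_C]; exact hCb
  have hT3 : (le2T k) ^ 3 ∈ le2O1 k := Algebra.subset_adjoin (by simp)
  have hT4 : (le2T k) ^ 4 ∈ le2O1 k := Algebra.subset_adjoin (by simp)
  have hT5 : (le2T k) ^ 5 ∈ le2O1 k := Algebra.subset_adjoin (by simp)
  have hT6 : (le2T k) ^ 6 ∈ le2O1 k := by
    have : (le2T k) ^ 6 = (le2T k) ^ 3 * (le2T k) ^ 3 := by ring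
    rw [this]; exact mul_mem hT3 hT3
  have hTinv : (le2T k)⁻¹ ∈ le2O2 k := Algebra.subset_adjoin (by simp)
  constructor
  · -- linear equivalence via f = (X - b)/(X - a)
    refine ⟨(RatFunc.X - algebraMap k _ b) * (RatFunc.X - algebraMap k _ a)⁻¹,
      mul_ne_zero hXb (inv_ne_zero hXa), ?_, ?_⟩
    · rw [le2D1, le2D1, Submodule.map_span]
      congr 1
      rw [Set.image_insert_eq, Set.image_insert_eq, Set.image_singleton]
      simp only [LinearMap.mulLeft_apply]
      have e3 : (RatFunc.X - algebraMap k _ b) * (RatFunc.X - algebraMap k _ a)⁻¹ *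
          (le2T k ^ 3 * (le2T k - algebraMap k (RatFunc k) a))
          = le2T k ^ 3 * (le2T k - algebraMap k (RatFunc k) b) := by
        unfold le2T; field_simp
      have e4 : (RatFunc.X - algebraMap k _ b) * (RatFunc.X - algebraMap k _ a)⁻¹ *
          (le2T k ^ 4 * (le2T k - algebraMap k (RatFunc k) a))
          = le2T k ^ 4 * (le2T k - algebraMap k (RatFunc k) b) := by
        unfold le2T; field_simp
      have e5 : (RatFunc.X - algebraMap k _ b) * (RatFunc.X - algebraMap k _ a)⁻¹ *
          (le2T k ^ 5 * (le2T k - algebraMap k (RatFunc k) a))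
          = le2T k ^ 5 * (le2T k - algebraMap k (RatFunc k) b) := by
        unfold le2T; field_simp
      rw [e3, e4, e5]
    · rw [le2D2, le2D2, Submodule.map_span, Set.image_singleton,
        LinearMap.mulLeft_apply]
      have key : (RatFunc.X - algebraMap k _ b) * (RatFunc.X - algebraMap k _ a)⁻¹ *
          ((le2T k)⁻¹ - algebraMap k (RatFunc k) a⁻¹)
          = algebraMap k (RatFunc k) (b / a) *
            ((le2T k)⁻¹ - algebraMap k (RatFunc k) b⁻¹) := by
        unfold le2T
        rw [map_div₀, map_inv₀, map_inv₀]
        field_simp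
        ring
      rw [key]
      exact le2_span_const_mul k _ _ (div_ne_zero hb ha) _
  · -- two independent global sections: 1 and 1/(X - a)
    refine ⟨1, (RatFunc.X - algebraMap k _ a)⁻¹, ?_, ?_, ?_, ?_, ?_⟩
    · refine le2_span_mul_mem k _ _ _ ?_
      rintro s hs
      simp only [Set.mem_insert_iff, Set.mem_singleton_iff] at hs
      have key : ∀ n : ℕ, le2T k ^ n ∈ le2O1 k →
          le2T k ^ (n+1) ∈ le2O1 k →
          1 * (le2T k ^ n * (le2T k - algebraMap k (RatFunc k) a)) ∈ le2O1 k := by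
        intro n hn hn1
        have : 1 * (le2T k ^ n * (le2T k - algebraMap k (RatFunc k) a))
            = le2T k ^ (n+1) - algebraMap k (RatFunc k) a * le2T k ^ n := by ring
        rw [this]
        exact sub_mem hn1 (mul_mem ((le2O1 k).algebraMap_mem a) hn)
      rcases hs with rfl | rfl | rfl
      · exact key 3 hT3 hT4
      · exact key 4 hT4 hT5
      · exact key 5 hT5 hT6
    · refine le2_span_mul_mem k _ _ _ ?_
      rintro s hs
      simp only [Set.mem_singleton_iff] at hs
      subst hs
      rw [one_mul]
      exact sub_mem hTinv ((le2O2 k).algebraMap_mem _)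
    · refine le2_span_mul_mem k _ _ _ ?_
      rintro s hs
      simp only [Set.mem_insert_iff, Set.mem_singleton_iff] at hs
      have key : ∀ n : ℕ, le2T k ^ n ∈ le2O1 k →
          (RatFunc.X - algebraMap k _ a)⁻¹ *
            (le2T k ^ n * (le2T k - algebraMap k (RatFunc k) a)) ∈ le2O1 k := by
        intro n hn
        have : (RatFunc.X - algebraMap k _ a)⁻¹ *
            (le2T k ^ n * (le2T k - algebraMap k (RatFunc k) a)) = le2T k ^ n := by
          unfold le2T; field_simp
        rw [this]; exact hn
      rcases hs with rfl | rfl | rfl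
      · exact key 3 hT3
      · exact key 4 hT4
      · exact key 5 hT5
    · refine le2_span_mul_mem k _ _ _ ?_
      rintro s hs
      simp only [Set.mem_singleton_iff] at hs
      subst hs
      have : (RatFunc.X - algebraMap k _ a)⁻¹ *
          ((le2T k)⁻¹ - algebraMap k (RatFunc k) a⁻¹)
          = algebraMap k (RatFunc k) (-a⁻¹) * (le2T k)⁻¹ := by
        unfold le2T
        rw [map_neg, map_inv₀]
        field_simp
        ring
      rw [this]
      exact mul_mem ((le2O2 k).algebraMap_mem _) hTinv
    · rw [LinearIndependent.pair_iff' one_ne_zero]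
      intro c hc
      have hc' : algebraMap k (RatFunc k) c = (RatFunc.X - algebraMap k _ a)⁻¹ := by
        rw [← hc, Algebra.smul_def, mul_one]
      have hc0 : c ≠ 0 := by
        intro h
        rw [h, map_zero] at hc'
        exact inv_ne_zero hXa hc'.symm
      have : (RatFunc.X : RatFunc k) - algebraMap k _ a = algebraMap k (RatFunc k) c⁻¹ := by
        rw [map_inv₀, hc', inv_inv]
      have h2 : (RatFunc.X : RatFunc k) - algebraMap k _ (c⁻¹ + a) = 0 := by
        rw [map_add]; linear_combination this
      exact le2_X_sub_C_ne_zero k (c⁻¹ + a) h2
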